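/- Let s be a central element of a ring R with s² ≠ 1 and s² ≠ s, and let S = (s_iji) be the principal multiplier matrix of an (s1)-formal matrix ring M(n,R,s). Then the relation i ~ j defined by s_iji = 1 is an equivalence relation on {1,…,n}; hence there exists a permutation τ of {1,…,n} such that τS is in canonical form: block-diagonal with blocks of 1's on the main diagonal and the element s in all remaining positions. -/
import Mathlib


/-- cf. [KryT17, Lemma 18.2]: For the principal multiplier matrix
`(t i j i)` of an (s1)-formal matrix ring, the relation `i ~ j ↔ t i j i = 1` is
an equivalence relation; hence some permutation `τ` brings it to canonical form:
block-diagonal with blocks of `1`s on the diagonal and `s` elsewhere. -/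
theorem s1_principal_matrix_canonical_form {R : Type*} [Ring R] (n : ℕ) (s : R)
    (hscent : ∀ r : R, s * r = r * s) (hs1 : s ^ 2 ≠ 1) (hss : s ^ 2 ≠ s)
    (t : Fin n → Fin n → Fin n → R)
    (hcent : ∀ i j k (r : R), t i j k * r = r * t i j k)
    (h1 : ∀ i k, t i i k = 1) (h2 : ∀ i k, t i k k = 1)
    (hmul : ∀ i j k l, t i j k * t i k l = t i j l * t j k l)
    (h1s : ∀ i j k, t i j k = 1 ∨ t i j k = s) :
    Equivalence (fun i j : Fin n => t i j i = 1) ∧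
    ∃ (τ : Equiv.Perm (Fin n)) (b : Fin n → ℕ), Monotone b ∧
      ∀ i j, t (τ i) (τ j) (τ i) = if b i = b j then (1 : R) else s := by
  -- symmetry of the principal matrix
  have hsymm : ∀ i j, t i j i = t j i j := by
    intro i j
    have := hmul i j i j
    rw [h1 i j, h2 i j, mul_one, one_mul] at this
    exact this
  -- transitivity
  have htrans : ∀ {i j k}, t i j i = 1 → t j k j = 1 → t i k i = 1 := by
    intro i j k hij hjk
    rcases h1s i k i with h | hik
    · exact h
    exfalso
    -- Step 1: t i k j = s
    have e1 := hmul i k j i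
    rw [hij, hik, mul_one] at e1
    -- e1 : t i k j = s * t k j i
    have hikj : t i k j = s := by
      rcases h1s k j i with h | h
      · rw [h, mul_one] at e1; exact e1
      · rw [h, ← sq] at e1
        rcases h1s i k j with h' | h'
        · exact absurd (h' ▸ e1.symm) hs1
        · exact absurd (h' ▸ e1.symm) hss
    -- Step 2: contradiction from hmul i k j k
    have e2 := hmul i k j k
    rw [hikj, h2 i k, hsymm k j, hjk, one_mul] at e2
    -- e2 : s * t i j k = 1
    rcases h1s i j k with h' | h'
    · rw [h', mul_one] at e2
      exact hss (by rw [sq, e2, one_mul])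
    · rw [h', ← sq] at e2
      exact hs1 e2
  have hequiv : Equivalence (fun i j : Fin n => t i j i = 1) := by
    refine ⟨fun i => h1 i i, ?_, ?_⟩
    · intro i j h; rw [hsymm j i]; exact h
    · intro i j k hij hjk; exact htrans hij hjk
  refine ⟨hequiv, ?_⟩
  classical
  rcases Nat.eq_zero_or_pos n with hn | hn
  · subst hn
    exact ⟨1, fun i => 0, monotone_const, fun i => i.elim0⟩
  -- minimal representative of the class of i
  have hne : ∀ i : Fin n, (Finset.univ.filter (fun j => t i j i = 1)).Nonempty :=
    fun i => ⟨i, by simp [h1 i i]⟩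
  set m : Fin n → Fin n := fun i => (Finset.univ.filter (fun j => t i j i = 1)).min' (hne i)
    with hm
  have hmrel : ∀ i, t i (m i) i = 1 := by
    intro i
    have := Finset.min'_mem _ (hne i)
    simpa using this
  have hiff : ∀ i j, t i j i = 1 ↔ m i = m j := by
    intro i j
    constructor
    · intro hij
      have hset : (Finset.univ.filter (fun k => t i k i = 1))
          = (Finset.univ.filter (fun k => t j k j = 1)) := by
        ext k
        simp only [Finset.mem_filter, Finset.mem_univ, true_and]
        constructor
        · intro h; exact htrans (by rw [hsymm j i]; exact hij) h
        · intro h; exact htrans hij h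
      simp only [hm]
      congr 1
    · intro h
      have h1' : t i (m i) i = 1 := hmrel i
      have h2' : t j (m j) j = 1 := hmrel j
      rw [h] at h1'
      exact htrans h1' (by rw [hsymm (m j) j]; exact h2')
  refine ⟨Tuple.sort m, fun i => ((m (Tuple.sort m i)) : ℕ), ?_, ?_⟩
  · intro a b hab
    exact Tuple.monotone_sort m hab
  · intro i j
    by_cases h : ((m (Tuple.sort m i)) : ℕ) = ((m (Tuple.sort m j)) : ℕ)
    · rw [if_pos h]
      exact (hiff _ _).mpr (Fin.val_injective h)
    · rw [if_neg h]
      rcases h1s (Tuple.sort m i) (Tuple.sort m j) (Tuple.sort m i) with h' | h'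
      · exact absurd (congrArg Fin.val ((hiff _ _).mp h')) h
      · exact h'
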